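/- Let G = Fₙ × ℤ^m be the direct product of a free group of finite rank n with ℤ^m, and let H be a finitely generated subgroup of G. Let Hπ ≤ Fₙ be the projection of H to the free factor and L_H = H ∩ ({1} × ℤ^m), viewed as a subgroup of ℤ^m. Then the spectrum of G with respect to H satisfies Ord_H(G) ⊆ Ord_{Hπ}(Fₙ) · Ord_{L_H}(ℤ^m) (every relative order in H is a product r·s with r ∈ Ord_{Hπ}(Fₙ) and s ∈ Ord_{L_H}(ℤ^m)); in particular, Ord_H(G) is bounded. -/

import Mathlib

namespace FGAux
open FreeGroup List

variable {α : Type*} [DecidableEq α]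
variable {L L₁ L₂ : List (α × Bool)}

def Rl (a b : α × Bool) : Prop := b ≠ (a.1, !a.2)

theorem rl_iff (x y : α × Bool) : Rl x y ↔ ¬(x.1 = y.1 ∧ x.2 = !y.2) := by
  obtain ⟨x1, x2⟩ := x; obtain ⟨y1, y2⟩ := y
  simp only [Rl, Prod.mk.injEq, not_and]
  cases x2 <;> cases y2 <;> simp [eq_comm]

theorem Rl.symm {x y : α × Bool} (h : Rl x y) : Rl y x := by
  obtain ⟨x1, x2⟩ := x; obtain ⟨y1, y2⟩ := y
  simp only [Rl, Prod.mk.injEq, not_and] at *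
  cases x2 <;> cases y2 <;> simp_all [eq_comm]

abbrev Reduced (L : List (α × Bool)) : Prop := List.Chain' Rl L

theorem reduced_iff : Reduced L ↔ reduce L = L := by
  induction L with
  | nil => simp [Reduced, List.Chain']
  | cons x L ih =>
    constructor
    · intro h
      have hred : reduce L = L := ih.1 h.tail
      rw [reduce.cons, hred]
      cases L with
      | nil => rfl
      | cons y t =>
        have hxy : Rl x y := (List.isChain_cons_cons.1 h).1
        simp only
        rw [if_neg ((rl_iff x y).1 hxy)]
    · intro h
      have hlen : (reduce L).length ≤ L.length := Red.length_le reduce.red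
      rw [reduce.cons] at h
      cases hL : reduce L with
      | nil =>
        rw [hL] at h
        have : [] = L := by injection h
        subst this
        simp [Reduced, List.Chain']
      | cons y t =>
        rw [hL] at h
        dsimp only at h
        by_cases hc : x.1 = y.1 ∧ x.2 = !y.2
        · rw [if_pos hc] at h
          exfalso
          have h1 : t.length = L.length + 1 := by rw [h]; simp
          have h2 : (y :: t).length ≤ L.length := hL ▸ hlen
          simp at h2; omega
        · rw [if_neg hc] at h
          have hL' : y :: t = L := by injection h
          have hredL : Reduced L := ih.2 (by rw [hL, hL'])
          rw [← hL']
          rw [← hL'] at hredL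
          exact List.isChain_cons_cons.2 ⟨(rl_iff x y).2 hc, hredL⟩

theorem toWord_reduced (x : FreeGroup α) : Reduced x.toWord :=
  reduced_iff.2 (reduce_toWord x)

theorem toWord_mk_reduced (h : Reduced L) : (FreeGroup.mk L).toWord = L := by
  rw [toWord_mk, reduced_iff.1 h]

theorem Reduced.infix (h : Reduced L) (h' : L₁ <:+: L) : Reduced L₁ := List.IsChain.infix h h'

theorem invRev_reduced (h : Reduced L) : Reduced (invRev L) := by
  rw [reduced_iff] at h ⊢
  rw [reduce_invRev, h]

theorem invRev_append : invRev (L₁ ++ L₂) = invRev L₂ ++ invRev L₁ := by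
  simp [invRev]

theorem invRev_singleton (x : α × Bool) : invRev [x] = [(x.1, !x.2)] := by
  simp [invRev]

/-- Cancellation decomposition of a product of two reduced words. -/
theorem decomp : ∀ (X Y : List (α × Bool)), Reduced X → Reduced Y →
    ∃ A C B, X = A ++ C ∧ Y = invRev C ++ B ∧ reduce (X ++ Y) = A ++ B := by
  intro X
  induction X using List.reverseRecOn with
  | nil =>
    intro Y _ hY
    exact ⟨[], [], Y, by simp, by simp [invRev], by simpa [reduced_iff] using hY⟩
  | append_singleton X' x ih =>
    intro Y hX hY
    cases Y with
    | nil =>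
      refine ⟨X' ++ [x], [], [], by simp, by simp [invRev], by simpa [reduced_iff] using hX⟩
    | cons y Y' =>
      by_cases hc : y = (x.1, !x.2)
      · -- cancellation
        have hX' : Reduced X' := hX.infix ⟨[], [x], by simp⟩
        have hY' : Reduced Y' := hY.tail
        obtain ⟨A, C', B, h1, h2, h3⟩ := ih Y' hX' hY'
        refine ⟨A, C' ++ [x], B, ?_, ?_, ?_⟩
        · rw [h1, List.append_assoc]
        · rw [invRev_append, invRev_singleton, ← hc, h2]; simp
        · have hstep : Red.Step ((X' ++ [x]) ++ y :: Y') (X' ++ Y') := by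
            subst hc
            simpa using (@Red.Step.not α X' Y' x.1 x.2)
          rw [← h3]
          exact reduce.Step.eq hstep
      · -- no cancellation
        refine ⟨X' ++ [x], [], y :: Y', by simp, by simp [invRev], ?_⟩
        have hred : Reduced ((X' ++ [x]) ++ y :: Y') := by
          refine List.IsChain.append hX hY ?_
          intro a ha b hb
          simp at ha hb
          subst hb
          subst ha
          exact hc
        exact reduced_iff.1 hred

theorem pre_decomp (x y : FreeGroup α) :
    ∃ A C B, x.toWord = A ++ C ∧ y.toWord = invRev C ++ B ∧ (x * y).toWord = A ++ B := by
  obtain ⟨A, C, B, h1, h2, h3⟩ := decomp x.toWord y.toWord (toWord_reduced x) (toWord_reduced y)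
  refine ⟨A, C, B, h1, h2, ?_⟩
  have hxy : x * y = FreeGroup.mk (x.toWord ++ y.toWord) := by
    rw [← mul_mk, mk_toWord, mk_toWord]
  rw [hxy, toWord_mk, h3]

theorem pre_mul (p a b : FreeGroup α) (h : p.toWord <+: (a * b).toWord) :
    p.toWord <+: a.toWord ∨ (a⁻¹ * p).toWord <+: b.toWord := by
  obtain ⟨A, C, B, h1, h2, h3⟩ := pre_decomp a b
  rw [h3] at h
  by_cases hlen : p.toWord.length ≤ A.length
  · left
    have h4 : p.toWord <+: A :=
      List.prefix_of_prefix_length_le h (List.prefix_append A B) hlen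
    rw [h1]
    exact h4.trans (List.prefix_append A C)
  · right
    push_neg at hlen
    have hA : A <+: p.toWord :=
      List.prefix_of_prefix_length_le (List.prefix_append A B) h hlen.le
    obtain ⟨P₂, hP₂⟩ := hA
    have hP₂B : P₂ <+: B := by
      obtain ⟨t, ht⟩ := h
      refine ⟨t, ?_⟩
      rw [← hP₂, List.append_assoc] at ht
      exact List.append_cancel_left ht
    have hx : a⁻¹ * p = FreeGroup.mk (invRev C ++ P₂) := by
      have ha : a = FreeGroup.mk A * FreeGroup.mk C := by rw [mul_mk, ← h1, mk_toWord]
      have hp : p = FreeGroup.mk A * FreeGroup.mk P₂ := by rw [mul_mk, hP₂, mk_toWord]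
      rw [ha, hp, ← mul_mk, ← inv_mk]
      group
    have hredb : Reduced (invRev C ++ B) := h2 ▸ toWord_reduced b
    have hpre : invRev C ++ P₂ <+: invRev C ++ B := by
      obtain ⟨t, ht⟩ := hP₂B
      exact ⟨t, by rw [List.append_assoc, ht]⟩
    have hred : Reduced (invRev C ++ P₂) := hredb.infix hpre.isInfix
    rw [hx, toWord_mk_reduced hred, h2]
    exact hpre

theorem pre_inv (p w : FreeGroup α) (h : p.toWord <+: w.toWord) :
    (w⁻¹ * p).toWord <+: (w⁻¹).toWord := by
  obtain ⟨Q, hQ⟩ := h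
  have hx : w⁻¹ * p = FreeGroup.mk (invRev Q) := by
    have hw : w = FreeGroup.mk p.toWord * FreeGroup.mk Q := by rw [mul_mk, hQ, mk_toWord]
    have key : w⁻¹ * p = (FreeGroup.mk p.toWord * FreeGroup.mk Q)⁻¹ * FreeGroup.mk p.toWord := by
      rw [← hw, mk_toWord]
    rw [key, ← inv_mk]
    group
  have hredw : Reduced (p.toWord ++ Q) := hQ ▸ toWord_reduced w
  have hred : Reduced (invRev Q) :=
    invRev_reduced (hredw.infix ⟨p.toWord, [], by simp⟩)
  rw [hx, toWord_mk_reduced hred, toWord_inv, ← hQ, invRev_append]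
  exact List.prefix_append _ _

theorem qc (T : Finset (FreeGroup α)) (M : ℕ) (hM : ∀ t ∈ T, FreeGroup.norm t ≤ M)
    {w : FreeGroup α} (hw : w ∈ Subgroup.closure (T : Set (FreeGroup α))) :
    ∀ p : FreeGroup α, p.toWord <+: w.toWord →
      ∃ v ∈ Subgroup.closure (T : Set (FreeGroup α)), FreeGroup.norm (v⁻¹ * p) ≤ M := by
  induction hw using Subgroup.closure_induction with
  | mem t ht =>
    intro p hpre
    refine ⟨1, one_mem _, ?_⟩
    rw [inv_one, one_mul]
    calc FreeGroup.norm p = p.toWord.length := rfl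
    _ ≤ t.toWord.length := hpre.length_le
    _ ≤ M := hM t ht
  | one =>
    intro p hpre
    rw [toWord_one, List.prefix_nil] at hpre
    have : p = 1 := toWord_eq_nil_iff.1 hpre
    subst this
    exact ⟨1, one_mem _, by simp⟩
  | mul a b ha hb iha ihb =>
    intro p hpre
    rcases pre_mul p a b hpre with h1 | h2
    · exact iha p h1
    · obtain ⟨v, hv, hn⟩ := ihb (a⁻¹ * p) h2
      refine ⟨a * v, mul_mem ha hv, ?_⟩
      rw [mul_inv_rev, mul_assoc]
      exact hn
  | inv a ha iha =>
    intro p hpre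
    have h2 := pre_inv p a⁻¹ hpre
    rw [inv_inv] at h2
    obtain ⟨v, hv, hn⟩ := iha (a * p) h2
    refine ⟨a⁻¹ * v, mul_mem (inv_mem ha) hv, ?_⟩
    rw [mul_inv_rev, inv_inv, mul_assoc]
    exact hn

theorem rl_self (w : α × Bool) : Rl w w := by
  intro h
  have := congrArg Prod.snd h
  simp at this

/-- Cyclic reduction of a reduced word. -/
theorem cyc_word : ∀ (N : ℕ) (W : List (α × Bool)), W.length ≤ N → Reduced W → W ≠ [] →
    ∃ U T, W = U ++ (T ++ invRev U) ∧ T ≠ [] ∧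
      (∀ a ∈ T.getLast?, ∀ b ∈ T.head?, Rl a b) := by
  intro N
  induction N with
  | zero =>
    intro W hlen _ hne
    exact absurd (List.eq_nil_of_length_eq_zero (Nat.le_zero.1 hlen)) hne
  | succ N ih =>
    intro W hlen hred hne
    by_cases hcyc : ∀ a ∈ W.getLast?, ∀ b ∈ W.head?, Rl a b
    · exact ⟨[], W, by simp [invRev], hne, hcyc⟩
    · push_neg at hcyc
      obtain ⟨a, ha, b, hb, hab⟩ := hcyc
      cases W with
      | nil => exact absurd rfl hne
      | cons w W₁ =>
        have hbw : b = w := by simpa using hb.symm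
        rcases List.eq_nil_or_concat W₁ with h1 | ⟨Mid, y, h1⟩
        · subst h1
          have hbab : a = w := by simpa using ha.symm
          rw [hbab, hbw] at hab
          exact absurd (rl_self w) hab
        · rw [List.concat_eq_append] at h1
          subst h1
          have hay : a = y := by
            have h5 : (w :: (Mid ++ [y])).getLast? = some y := by
              rw [show w :: (Mid ++ [y]) = (w :: Mid) ++ [y] by simp,
                List.getLast?_concat]
            rw [h5] at ha
            simpa using ha.symm
          subst hay
          subst hbw
          -- hab : ¬ Rl a b with b = w
          have hba : b = (a.1, !a.2) := by
            by_contra hc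
            exact hab hc
          have hMidne : Mid ≠ [] := by
            rintro rfl
            simp only [List.nil_append] at hred
            have h6 : Rl b a := List.isChain_cons_cons.1 hred |>.1
            exact h6.symm (by rw [hba])
          have hMidred : Reduced Mid := hred.infix ⟨[b], [a], by simp⟩
          have hMidlen : Mid.length ≤ N := by
            simp only [List.length_cons, List.length_append, List.length_singleton] at hlen
            omega
          obtain ⟨U', T, h2, h3, h4⟩ := ih Mid hMidlen hMidred hMidne
          refine ⟨b :: U', T, ?_, h3, h4⟩
          have hinv : invRev (b :: U') = invRev U' ++ [(b.1, !b.2)] := by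
            rw [show (b :: U') = [b] ++ U' by simp, invRev_append, invRev_singleton]
          have hby : (b.1, !b.2) = a := by
            rw [hba]; simp
          rw [hinv, h2, hby]
          simp


def Lpow (T : List (α × Bool)) (i : ℕ) : List (α × Bool) := (List.replicate i T).flatten

theorem Lpow_zero (T : List (α × Bool)) : Lpow T 0 = [] := rfl

theorem Lpow_succ (T : List (α × Bool)) (i : ℕ) : Lpow T (i + 1) = T ++ Lpow T i := by
  simp [Lpow, List.replicate_succ]

theorem Lpow_add (T : List (α × Bool)) (i j : ℕ) :
    Lpow T (i + j) = Lpow T i ++ Lpow T j := by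
  rw [Lpow, Lpow, Lpow, List.replicate_add, List.flatten_append]

theorem Lpow_prefix (T : List (α × Bool)) {i c : ℕ} (h : i ≤ c) :
    Lpow T i <+: Lpow T c := by
  refine ⟨Lpow T (c - i), ?_⟩
  rw [← Lpow_add, Nat.add_sub_cancel' h]

theorem Lpow_ne_nil (T : List (α × Bool)) (hT : T ≠ []) {i : ℕ} (hi : 1 ≤ i) :
    Lpow T i ≠ [] := by
  obtain ⟨j, rfl⟩ := Nat.exists_eq_add_of_le hi
  rw [add_comm, Lpow_succ]
  intro h
  exact hT (List.append_eq_nil_iff.1 h).1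

theorem Lpow_head? (T : List (α × Bool)) (hT : T ≠ []) {i : ℕ} (hi : 1 ≤ i) :
    (Lpow T i).head? = T.head? := by
  obtain ⟨j, rfl⟩ := Nat.exists_eq_add_of_le hi
  rw [add_comm, Lpow_succ]
  exact List.head?_append_of_ne_nil T hT

theorem Lpow_getLast? (T : List (α × Bool)) (hT : T ≠ []) :
    ∀ {i : ℕ}, 1 ≤ i → (Lpow T i).getLast? = T.getLast? := by
  intro i
  induction i with
  | zero => intro h; omega
  | succ j ihj =>
    intro _
    rw [Lpow_succ]
    rcases Nat.eq_zero_or_pos j with h0 | h1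
    · subst h0
      rw [Lpow_zero, List.append_nil]
    · rw [List.getLast?_append_of_ne_nil T (Lpow_ne_nil T hT h1), ihj h1]

theorem Lpow_reduced (T : List (α × Bool)) (hT : Reduced T) (hTne : T ≠ [])
    (hcyc : ∀ a ∈ T.getLast?, ∀ b ∈ T.head?, Rl a b) :
    ∀ i : ℕ, Reduced (Lpow T i) := by
  intro i
  induction i with
  | zero => simp [Lpow_zero, Reduced, List.Chain']
  | succ j ihj =>
    rw [Lpow_succ]
    refine List.IsChain.append hT ihj ?_
    intro x hx y hy
    rcases Nat.eq_zero_or_pos j with h0 | h1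
    · subst h0; simp [Lpow_zero] at hy
    · rw [Lpow_head? T hTne h1] at hy
      exact hcyc x hx y hy

/-- The full power word is reduced. -/
theorem big_reduced (U T : List (α × Bool)) (hred : Reduced (U ++ (T ++ invRev U)))
    (hTne : T ≠ []) (hcyc : ∀ a ∈ T.getLast?, ∀ b ∈ T.head?, Rl a b)
    {c : ℕ} (hc : 1 ≤ c) : Reduced (U ++ (Lpow T c ++ invRev U)) := by
  obtain ⟨hU, hTU, hjU⟩ := List.isChain_append.1 hred
  obtain ⟨hT, hIU, hjT⟩ := List.isChain_append.1 hTU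
  refine List.IsChain.append hU (List.IsChain.append (Lpow_reduced T hT hTne hcyc c) hIU ?_) ?_
  · intro x hx y hy
    rw [Lpow_getLast? T hTne hc] at hx
    exact hjT x hx y hy
  · intro x hx y hy
    rw [List.head?_append_of_ne_nil _ (Lpow_ne_nil T hTne hc)] at hy
    rw [Lpow_head? T hTne hc] at hy
    refine hjU x hx y ?_
    rw [List.head?_append_of_ne_nil _ hTne]
    exact hy

theorem conj_pow_aux {G : Type*} [Group G] (u t : G) (k : ℕ) :
    (u * t * u⁻¹) ^ k = u * t ^ k * u⁻¹ := by
  induction k with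
  | zero => simp
  | succ j ihj =>
    rw [pow_succ, pow_succ, ihj]
    group


/-- Core boundedness: in a free group over a finite alphabet, minimal positive powers landing
in a finitely generated subgroup are bounded. -/
theorem free_core [Finite α] (T : Finset (FreeGroup α)) :
    ∃ N : ℕ, 1 ≤ N ∧ ∀ (x : FreeGroup α) (c : ℕ), 1 ≤ c →
      x ^ c ∈ Subgroup.closure (T : Set (FreeGroup α)) →
      (∀ k, 1 ≤ k → k < c → x ^ k ∉ Subgroup.closure (T : Set (FreeGroup α))) → c ≤ N := by
  classical
  set M := T.sup FreeGroup.norm with hMdef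
  have hM : ∀ t ∈ T, FreeGroup.norm t ≤ M := fun t ht => Finset.le_sup ht
  have hfin : {x : FreeGroup α | FreeGroup.norm x ≤ M}.Finite := by
    have hsub : {x : FreeGroup α | FreeGroup.norm x ≤ M} ⊆
        FreeGroup.toWord ⁻¹' {l : List (α × Bool) | l.length ≤ M} := fun x hx => hx
    exact (Set.Finite.preimage (toWord_injective.injOn) (List.finite_length_le _ M)).subset hsub
  set FS := hfin.toFinset with hFS
  refine ⟨FS.card, ?_, ?_⟩
  · refine Finset.card_pos.2 ⟨1, ?_⟩
    rw [hFS, Set.Finite.mem_toFinset]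
    simp
  intro x c hc1 hcmem hmin
  by_contra hgt
  push_neg at hgt
  have hcard1 : 1 ≤ FS.card := by
    refine Finset.card_pos.2 ⟨1, ?_⟩
    rw [hFS, Set.Finite.mem_toFinset]
    simp
  by_cases hx1 : x = 1
  · subst hx1
    exact hmin 1 le_rfl (by omega) (by simpa using one_mem _)
  have hWne : x.toWord ≠ [] := fun h => hx1 (toWord_eq_nil_iff.1 h)
  obtain ⟨U, T', hW, hT'ne, hcyc⟩ :=
    cyc_word x.toWord.length x.toWord le_rfl (toWord_reduced x) hWne
  set u := FreeGroup.mk U with hu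
  set t := FreeGroup.mk T' with ht
  have hxuv : x = u * t * u⁻¹ := by
    rw [hu, ht, inv_mk, mul_mk, mul_mk, List.append_assoc, ← hW, mk_toWord]
  have hredW : Reduced (U ++ (T' ++ invRev U)) := hW ▸ toWord_reduced x
  have htpow : ∀ k : ℕ, t ^ k = FreeGroup.mk (Lpow T' k) := by
    intro k
    rw [ht, pow_mk]
    rfl
  have hxc : ∀ k, 1 ≤ k → (x ^ k).toWord = U ++ (Lpow T' k ++ invRev U) := by
    intro k hk
    have h1 : x ^ k = FreeGroup.mk (U ++ (Lpow T' k ++ invRev U)) := by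
      rw [hxuv, conj_pow_aux, htpow, hu, inv_mk, mul_mk, mul_mk, List.append_assoc]
    rw [h1, toWord_mk_reduced (big_reduced U T' hredW hT'ne hcyc hk)]
  have hpre : ∀ i, i ≤ c → (u * t ^ i).toWord <+: (x ^ c).toWord := by
    intro i hi
    have h2 : u * t ^ i = FreeGroup.mk (U ++ Lpow T' i) := by
      rw [htpow, hu, mul_mk]
    have hpr : (U ++ Lpow T' i) <+: (U ++ (Lpow T' c ++ invRev U)) := by
      obtain ⟨R, hR⟩ := Lpow_prefix T' hi
      refine ⟨R ++ invRev U, ?_⟩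
      rw [← hR]
      simp [List.append_assoc]
    have hred2 : Reduced (U ++ Lpow T' i) :=
      (big_reduced U T' hredW hT'ne hcyc hc1).infix hpr.isInfix
    rw [h2, toWord_mk_reduced hred2, hxc c hc1]
    exact hpr
  have hqc : ∀ i, i < c → ∃ v ∈ Subgroup.closure (T : Set (FreeGroup α)),
      FreeGroup.norm (v⁻¹ * (u * t ^ i)) ≤ M :=
    fun i hi => qc T M hM hcmem (u * t ^ i) (hpre i hi.le)
  choose! v hv hnorm using hqc
  have hmaps : ∀ i ∈ Finset.range c, (v i)⁻¹ * (u * t ^ i) ∈ FS := by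
    intro i hi
    rw [hFS, Set.Finite.mem_toFinset]
    exact hnorm i (Finset.mem_range.1 hi)
  obtain ⟨i, hi, j, hj, hij, hfeq⟩ :=
    Finset.exists_ne_map_eq_of_card_lt_of_maps_to (by rwa [Finset.card_range]) hmaps
  have key : ∀ i j, i < j → j < c →
      (v i)⁻¹ * (u * t ^ i) = (v j)⁻¹ * (u * t ^ j) → False := by
    intro i j hlt hjc heq
    have hB : u * t ^ j = v j * ((v i)⁻¹ * (u * t ^ i)) := by
      rw [heq, mul_inv_cancel_left]
    have hBA : (u * t ^ j) * (u * t ^ i)⁻¹ = v j * (v i)⁻¹ := by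
      rw [hB]
      group
    have hx2 : x ^ (j - i) = (u * t ^ j) * (u * t ^ i)⁻¹ := by
      rw [hxuv, conj_pow_aux]
      have h3 : t ^ j = t ^ (j - i) * t ^ i := by
        rw [← pow_add, Nat.sub_add_cancel hlt.le]
      rw [h3]
      group
    have hmem2 : x ^ (j - i) ∈ Subgroup.closure (T : Set (FreeGroup α)) := by
      rw [hx2, hBA]
      exact mul_mem (hv j hjc) (inv_mem (hv i (lt_trans hlt hjc)))
    exact hmin (j - i) (by omega) (by omega) hmem2
  rcases hij.lt_or_gt with hlt | hlt
  · exact key i j hlt (Finset.mem_range.1 hj) hfeq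
  · exact key j i hlt (Finset.mem_range.1 hi) hfeq.symm

end FGAux



noncomputable def relOrd {G : Type*} [Group G] (H : Subgroup G) (g : G) : ℕ :=
  sInf {k : ℕ | 1 ≤ k ∧ g ^ k ∈ H}

section relOrdAPI
variable {G : Type*} [Group G] (H : Subgroup G) (g : G)

theorem relOrd_eq_zero (h : ∀ k, 1 ≤ k → g ^ k ∉ H) : relOrd H g = 0 := by
  have : {k : ℕ | 1 ≤ k ∧ g ^ k ∈ H} = ∅ := by
    ext k; simp only [Set.mem_setOf_eq, Set.mem_empty_iff_false, iff_false]
    rintro ⟨h1, h2⟩; exact h k h1 h2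
  rw [relOrd, this, Nat.sInf_empty]

theorem relOrd_mem (h : ∃ k, 1 ≤ k ∧ g ^ k ∈ H) :
    1 ≤ relOrd H g ∧ g ^ (relOrd H g) ∈ H :=
  Nat.sInf_mem h

theorem relOrd_le {k : ℕ} (h1 : 1 ≤ k) (h2 : g ^ k ∈ H) : relOrd H g ≤ k :=
  Nat.sInf_le ⟨h1, h2⟩

theorem relOrd_dvd (hne : ∃ k, 1 ≤ k ∧ g ^ k ∈ H) {k : ℕ} (hk : g ^ k ∈ H) :
    relOrd H g ∣ k := by
  obtain ⟨hd1, hdmem⟩ := relOrd_mem H g hne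
  set d := relOrd H g with hd
  have hr : g ^ (k % d) ∈ H := by
    have h2 : g ^ k = g ^ (d * (k / d)) * g ^ (k % d) := by
      rw [← pow_add, Nat.div_add_mod]
    have hq : g ^ (d * (k / d)) ∈ H := by
      rw [pow_mul]; exact pow_mem hdmem _
    have h3 : g ^ (k % d) = (g ^ (d * (k / d)))⁻¹ * g ^ k := by
      rw [h2, inv_mul_cancel_left]
    rw [h3]; exact mul_mem (inv_mem hq) hk
  rcases Nat.eq_zero_or_pos (k % d) with h0 | h1
  · exact Nat.dvd_of_mod_eq_zero h0
  · have := relOrd_le H g h1 hr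
    exact absurd (Nat.mod_lt k hd1) (not_lt.2 this)

theorem relOrd_one : relOrd H (1 : G) = 1 := by
  have h := relOrd_le H 1 le_rfl (by simpa using H.one_mem)
  have h2 := (relOrd_mem H 1 ⟨1, le_rfl, by simpa using H.one_mem⟩).1
  omega

theorem relOrd_eq (d : ℕ) (hd1 : 1 ≤ d) (hdmem : g ^ d ∈ H)
    (hmin : ∀ k, 1 ≤ k → g ^ k ∈ H → d ≤ k) : relOrd H g = d :=
  le_antisymm (relOrd_le H g hd1 hdmem)
    (hmin _ (relOrd_mem H g ⟨d, hd1, hdmem⟩).1 (relOrd_mem H g ⟨d, hd1, hdmem⟩).2)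

end relOrdAPI

section PartB

variable (n m : ℕ)

/-- Part 1 decomposition. -/
theorem partB (H : Subgroup (FreeGroup (Fin n) × Multiplicative (Fin m → ℤ)))
    (g : FreeGroup (Fin n) × Multiplicative (Fin m → ℤ)) :
    ∃ c : Multiplicative (Fin m → ℤ),
      relOrd H g = relOrd (H.map (MonoidHom.fst _ _)) g.1 *
        relOrd (H.comap (MonoidHom.inr (FreeGroup (Fin n)) (Multiplicative (Fin m → ℤ)))) c := by
  classical
  set Hπ := H.map (MonoidHom.fst (FreeGroup (Fin n)) (Multiplicative (Fin m → ℤ))) with hHπ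
  set L := H.comap (MonoidHom.inr (FreeGroup (Fin n)) (Multiplicative (Fin m → ℤ))) with hL
  obtain ⟨x, a⟩ := g
  -- fst of powers
  have hfst : ∀ k : ℕ, ((x, a) ^ k).1 = x ^ k := fun k => by simp
  by_cases hx : ∃ k, 1 ≤ k ∧ x ^ k ∈ Hπ
  · -- r ≥ 1 case
    set r := relOrd Hπ x with hr
    obtain ⟨hr1, hrmem⟩ := relOrd_mem Hπ x hx
    obtain ⟨h, hhH, hh1⟩ := hrmem
    set b := h.2 with hb
    have hhe : h = (x ^ r, b) := by
      ext
      · exact hh1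
      · rfl
    set c := a ^ r * b⁻¹ with hc
    refine ⟨c, ?_⟩
    -- key equivalence
    have key : ∀ k' : ℕ, ((x, a) ^ (r * k') ∈ H ↔ c ^ k' ∈ L) := by
      intro k'
      have hpow : (x, a) ^ (r * k') = (x ^ (r * k'), a ^ (r * k')) := by simp
      have hhk : (h : _) ^ k' = (x ^ (r * k'), b ^ k') := by
        rw [hhe]; simp [Prod.pow_mk, ← pow_mul]
      constructor
      · intro hmem
        have : (h ^ k')⁻¹ * (x, a) ^ (r * k') ∈ H := mul_mem (inv_mem (pow_mem hhH k')) hmem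
        rw [hhk, hpow] at this
        have heq : ((x ^ (r*k'), b ^ k') : FreeGroup (Fin n) × Multiplicative (Fin m → ℤ))⁻¹ *
            (x ^ (r*k'), a ^ (r*k')) = (1, c ^ k') := by
          rw [Prod.inv_mk, Prod.mk_mul_mk, inv_mul_cancel, hc]
          congr 1
          rw [mul_pow, mul_comm, inv_pow, ← pow_mul]
        rw [heq] at this
        simpa [hL, Subgroup.mem_comap] using this
      · intro hmem
        have h1 : ((1 : FreeGroup (Fin n)), c ^ k') ∈ H := by
          simpa [hL, Subgroup.mem_comap] using hmem
        have := mul_mem (pow_mem hhH k') h1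
        rw [hhk] at this
        have heq : ((x ^ (r*k'), b ^ k') : FreeGroup (Fin n) × Multiplicative (Fin m → ℤ)) *
            (1, c ^ k') = (x ^ (r*k'), a ^ (r*k')) := by
          rw [Prod.mk_mul_mk, mul_one, hc]
          congr 1
          rw [mul_pow, inv_pow, ← pow_mul, mul_comm (b ^ k'), mul_assoc, inv_mul_cancel, mul_one]
        rw [heq] at this
        rwa [hpow]
      -- end key
    have hdvd : ∀ k, 1 ≤ k → (x, a) ^ k ∈ H → ∃ k', k = r * k' ∧ 1 ≤ k' ∧ c ^ k' ∈ L := by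
      intro k hk1 hkmem
      have hxk : x ^ k ∈ Hπ := by
        rw [hHπ]
        have := Subgroup.mem_map_of_mem (MonoidHom.fst (FreeGroup (Fin n)) _) hkmem
        simpa using this
      obtain ⟨k', hk'⟩ := relOrd_dvd Hπ x hx hxk
      refine ⟨k', hk', ?_, ?_⟩
      · rcases Nat.eq_zero_or_pos k' with h0 | h1
        · subst h0; rw [mul_zero] at hk'; omega
        · exact h1
      · exact (key k').1 (hk' ▸ hkmem)
    by_cases hcL : ∃ k', 1 ≤ k' ∧ c ^ k' ∈ L
    · set s := relOrd L c with hs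
      obtain ⟨hs1, hsmem⟩ := relOrd_mem L c hcL
      have : relOrd H (x, a) = r * s := by
        refine relOrd_eq _ _ _ (by
          calc 1 = 1 * 1 := rfl
          _ ≤ r * s := Nat.mul_le_mul hr1 hs1) ((key s).2 hsmem) ?_
        intro k hk1 hkmem
        obtain ⟨k', rfl, hk'1, hk'L⟩ := hdvd k hk1 hkmem
        exact Nat.mul_le_mul_left r (relOrd_le L c hk'1 hk'L)
      rw [this]
    · push_neg at hcL
      have hz : relOrd H (x, a) = 0 := by
        refine relOrd_eq_zero _ _ ?_
        intro k hk1 hkmem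
        obtain ⟨k', rfl, hk'1, hk'L⟩ := hdvd k hk1 hkmem
        exact hcL k' hk'1 hk'L
      have hz2 : relOrd L c = 0 := relOrd_eq_zero _ _ hcL
      rw [hz, hz2, mul_zero]
  · -- no power of x in Hπ
    push_neg at hx
    refine ⟨1, ?_⟩
    have h1 : relOrd Hπ x = 0 := relOrd_eq_zero _ _ hx
    have h2 : relOrd H (x, a) = 0 := by
      refine relOrd_eq_zero _ _ ?_
      intro k hk1 hkmem
      refine hx k hk1 ?_
      rw [hHπ]
      have := Subgroup.mem_map_of_mem (MonoidHom.fst (FreeGroup (Fin n)) _) hkmem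
      simpa using this
    rw [h2, h1, zero_mul]

end PartB

section PartC1

theorem partC1 (m : ℕ) (L : Subgroup (Multiplicative (Fin m → ℤ))) :
    ∃ N : ℕ, 1 ≤ N ∧ ∀ a : Multiplicative (Fin m → ℤ), relOrd L a ≤ N := by
  classical
  -- the saturation of L as a submodule of ℤ^m
  set Sat : Submodule ℤ (Fin m → ℤ) :=
    { carrier := {v | ∃ k : ℕ, 1 ≤ k ∧ Multiplicative.ofAdd (k • v) ∈ L}
      add_mem' := by
        rintro a b ⟨k, hk1, hk⟩ ⟨l, hl1, hl⟩
        refine ⟨k * l, Nat.mul_le_mul hk1 hl1, ?_⟩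
        have : (k * l) • (a + b) = l • (k • a) + k • (l • b) := by
          rw [smul_add, ← mul_smul, ← mul_smul, mul_comm l k]
        rw [this, ofAdd_add]
        exact mul_mem (by rw [ofAdd_nsmul]; exact pow_mem hk l)
          (by rw [ofAdd_nsmul]; exact pow_mem hl k)
      zero_mem' := ⟨1, le_rfl, by simpa using L.one_mem⟩
      smul_mem' := by
        rintro z v ⟨k, hk1, hk⟩
        refine ⟨k, hk1, ?_⟩
        have : k • (z • v) = z • (k • v) := smul_comm k z v
        rw [this, ofAdd_zsmul]
        exact zpow_mem hk z } with hSat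
  obtain ⟨S, hS⟩ := IsNoetherian.noetherian Sat
  -- choose k for each generator
  have hmem : ∀ s ∈ S, (s : Fin m → ℤ) ∈ Sat := by
    intro s hs
    rw [← hS]
    exact Submodule.subset_span hs
  choose! kf hkf1 hkfL using fun s (hs : s ∈ S) => hmem s hs
  set K : ℕ := ∏ s ∈ S, kf s with hK
  have hK1 : 1 ≤ K := Finset.one_le_prod' (fun s hs => hkf1 s hs)
  have hKmem : ∀ v ∈ Sat, Multiplicative.ofAdd (K • v) ∈ L := by
    intro v hv
    rw [← hS] at hv
    induction hv using Submodule.span_induction with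
    | mem v hv =>
      obtain ⟨c, hc⟩ := Finset.dvd_prod_of_mem kf hv
      rw [← hK] at hc
      have : K • v = c • ((kf v) • v) := by rw [← mul_smul, mul_comm c, ← hc]
      rw [this, ofAdd_nsmul]
      exact pow_mem (hkfL v hv) c
    | zero => simpa using L.one_mem
    | add a b _ _ ha hb =>
      rw [smul_add, ofAdd_add]
      exact mul_mem ha hb
    | smul z v _ hv =>
      have : K • z • v = z • (K • v) := smul_comm K z v
      rw [this, ofAdd_zsmul]
      exact zpow_mem hv z
  refine ⟨K, hK1, ?_⟩
  intro a
  by_cases hv : Multiplicative.toAdd a ∈ Sat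
  · refine relOrd_le L a hK1 ?_
    have := hKmem _ hv
    rwa [ofAdd_nsmul, ofAdd_toAdd] at this
  · refine le_of_eq (le_zero_iff.1 (le_of_eq (relOrd_eq_zero L a ?_))) |>.trans (Nat.zero_le K)
    intro k hk1 hkmem
    exact absurd ⟨k, hk1, by rwa [ofAdd_nsmul, ofAdd_toAdd]⟩ hv

end PartC1


/-- In `G = Fₙ × ℤ^m`, for a finitely generated subgroup `H`, every relative order in `H` is a
product `r * s` with `r` a relative order in the projection `Hπ ≤ Fₙ` and `s` a relative order in
`L_H = H ∩ ({1} × ℤ^m) ≤ ℤ^m`; in particular the spectrum of `G` with respect to `H` is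
bounded. -/
theorem spectrum_FTA_subset_product (n m : ℕ)
    (H : Subgroup (FreeGroup (Fin n) × Multiplicative (Fin m → ℤ))) (hH : H.FG) :
    (∀ g : FreeGroup (Fin n) × Multiplicative (Fin m → ℤ),
      ∃ r ∈ Set.range (relOrd
          (H.map (MonoidHom.fst (FreeGroup (Fin n)) (Multiplicative (Fin m → ℤ))))),
        ∃ s ∈ Set.range (relOrd
          (H.comap (MonoidHom.inr (FreeGroup (Fin n)) (Multiplicative (Fin m → ℤ))))),
          relOrd H g = r * s) ∧
    ∃ N : ℕ, ∀ g : FreeGroup (Fin n) × Multiplicative (Fin m → ℤ), relOrd H g ≤ N := by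
  classical
  constructor
  · intro g
    obtain ⟨c, hc⟩ := partB n m H g
    exact ⟨_, ⟨g.1, rfl⟩, _, ⟨c, rfl⟩, hc⟩
  · obtain ⟨S, hS⟩ := hH
    set f := MonoidHom.fst (FreeGroup (Fin n)) (Multiplicative (Fin m → ℤ)) with hf
    set K := H.map f with hK
    have hKc : K = Subgroup.closure ↑(S.image f) := by
      rw [hK, ← hS, MonoidHom.map_closure, Finset.coe_image]
    obtain ⟨N₁, hN₁1, hN₁⟩ := FGAux.free_core (S.image f)
    obtain ⟨N₂, hN₂1, hN₂⟩ :=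
      partC1 m (H.comap (MonoidHom.inr (FreeGroup (Fin n)) (Multiplicative (Fin m → ℤ))))
    refine ⟨N₁ * N₂, ?_⟩
    intro g
    obtain ⟨c, hc⟩ := partB n m H g
    rw [hc]
    refine Nat.mul_le_mul ?_ (hN₂ c)
    by_cases hk : ∃ k, 1 ≤ k ∧ g.1 ^ k ∈ K
    · obtain ⟨h1, h2⟩ := relOrd_mem K g.1 hk
      refine hN₁ g.1 (relOrd K g.1) h1 (by rwa [← hKc]) ?_
      intro k hk1 hklt hmem
      have := relOrd_le K g.1 hk1 (by rwa [hKc])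
      omega
    · push_neg at hk
      rw [relOrd_eq_zero K g.1 hk]
      exact Nat.zero_le _
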